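/- arXiv:1703.00609 — 4 statements merged into one kernel-verified Lean document; each statement's English description precedes it below -/
import Mathlib

section
/- For even d ≥ 2, any t ∈ F_q and m ∈ F_q^d, the normalized Fourier transform of the sphere S_t = {x ∈ F_q^d : x_1^2+...+x_d^2 = t} satisfies Ŝ_t(m) = q^{-1} δ_0(m) + q^{-d-1} G^d ∑_{ℓ∈F_q^*} χ(tℓ + ‖m‖/(4ℓ)), where δ_0(m) = 1 if m = 0 and 0 otherwise, ‖m‖ = m_1^2+...+m_d^2, and G = ∑_{s∈F_q^*} η(s)χ(s) is the Gauss sum with η the quadratic character of F_q. -/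
open Finset

set_option linter.unusedSectionVars false

section aux

variable {F : Type*} [Field F] [Fintype F] [DecidableEq F]

private lemma addChar_map_sum {ι : Type*} (s : Finset ι) (χ : AddChar F ℂ) (f : ι → F) :
    χ (∑ i ∈ s, f i) = ∏ i ∈ s, χ (f i) := by
  induction s using Finset.cons_induction with
  | empty => simp
  | cons a s ha ih => rw [Finset.sum_cons, Finset.prod_cons, AddChar.map_add_eq_mul, ih]

private lemma sum_char_mul (χ : AddChar F ℂ) (hχ : χ ≠ 1) (a : F) :
    ∑ ℓ : F, χ (ℓ * a) = if a = 0 then (Fintype.card F : ℂ) else 0 := by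
  rw [AddChar.sum_mulShift a (AddChar.IsPrimitive.of_ne_one hχ)]
  split_ifs <;> simp

private lemma quad_cast_sq {a : F} (ha : a ≠ 0) :
    ((quadraticChar F a : ℤ) : ℂ) * ((quadraticChar F a : ℤ) : ℂ) = 1 := by
  rw [← sq]
  exact_mod_cast quadraticChar_sq_one ha

/-- quadratic Gauss sum with scaling -/
private lemma sum_chi_sq (hchar : ringChar F ≠ 2) (χ : AddChar F ℂ) (hχ : χ ≠ 1)
    {a : F} (ha : a ≠ 0) :
    ∑ u : F, χ (a * u ^ 2)
      = ((quadraticChar F a : ℤ) : ℂ) * ∑ s : F, ((quadraticChar F s : ℤ) : ℂ) * χ s := by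
  have hcard : ∀ v : F, (((univ.filter fun u : F => u ^ 2 = v).card : ℤ) : ℂ)
      = ((quadraticChar F v : ℤ) : ℂ) + 1 := by
    intro v
    have h := quadraticChar_card_sqrts hchar v
    rw [Set.toFinset_setOf] at h
    exact_mod_cast congrArg (fun z : ℤ => (z : ℂ)) h
  have h1 : ∑ u : F, χ (a * u ^ 2)
      = ∑ v : F, ∑ u ∈ univ.filter (fun u : F => u ^ 2 = v), χ (a * v) :=
    (Finset.sum_fiberwise' univ (fun u : F => u ^ 2) (fun v => χ (a * v))).symm
  have h2 : ∑ u : F, χ (a * u ^ 2)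
      = ∑ v : F, (((quadraticChar F v : ℤ) : ℂ) + 1) * χ (a * v) := by
    rw [h1]
    refine Finset.sum_congr rfl fun v _ => ?_
    rw [Finset.sum_const, nsmul_eq_mul, ← hcard v]
    push_cast
    ring
  have h3 : ∑ v : F, χ (a * v) = 0 := by
    have := sum_char_mul χ hχ a
    simp_rw [mul_comm] at this
    rw [this, if_neg ha]
  have h4 : ((quadraticChar F a : ℤ) : ℂ) * ∑ v : F, ((quadraticChar F v : ℤ) : ℂ) * χ (a * v)
      = ∑ s : F, ((quadraticChar F s : ℤ) : ℂ) * χ s := by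
    have := gaussSum_mulShift ((quadraticChar F).ringHomComp (Int.castRingHom ℂ)) χ
      (Units.mk0 a ha)
    simpa [gaussSum, AddChar.mulShift_apply, MulChar.ringHomComp_apply, Finset.mul_sum,
      mul_left_comm] using this
  calc ∑ u : F, χ (a * u ^ 2)
      = ∑ v : F, ((quadraticChar F v : ℤ) : ℂ) * χ (a * v) + ∑ v : F, χ (a * v) := by
        rw [h2, ← Finset.sum_add_distrib]
        exact Finset.sum_congr rfl fun v _ => by ring
    _ = ∑ v : F, ((quadraticChar F v : ℤ) : ℂ) * χ (a * v) := by rw [h3, add_zero]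
    _ = ((quadraticChar F a : ℤ) : ℂ)
          * (((quadraticChar F a : ℤ) : ℂ) * ∑ v : F, ((quadraticChar F v : ℤ) : ℂ) * χ (a * v)) := by
        rw [← mul_assoc, quad_cast_sq ha, one_mul]
    _ = _ := by rw [h4]

/-- completing the square -/
private lemma sum_complete_sq (hchar : ringChar F ≠ 2) (χ : AddChar F ℂ) (hχ : χ ≠ 1)
    {ℓ : F} (hℓ : ℓ ≠ 0) (c : F) :
    ∑ s : F, χ (ℓ * s ^ 2 - c * s)
      = χ (-(c ^ 2 / (4 * ℓ))) *
          (((quadraticChar F ℓ : ℤ) : ℂ) * ∑ s : F, ((quadraticChar F s : ℤ) : ℂ) * χ s) := by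
  have h2 : (2 : F) ≠ 0 := Ring.two_ne_zero hchar
  have h4 : (4 : F) ≠ 0 := by
    have : (4 : F) = 2 * 2 := by norm_num
    rw [this]; exact mul_ne_zero h2 h2
  have step : ∀ u : F, ℓ * (u + c / (2 * ℓ)) ^ 2 - c * (u + c / (2 * ℓ))
      = ℓ * u ^ 2 + -(c ^ 2 / (4 * ℓ)) := by
    intro u
    field_simp
    ring
  calc ∑ s : F, χ (ℓ * s ^ 2 - c * s)
      = ∑ u : F, χ (ℓ * u ^ 2 + -(c ^ 2 / (4 * ℓ))) := by
        rw [← Equiv.sum_comp (Equiv.addRight (c / (2 * ℓ)))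
          (fun s => χ (ℓ * s ^ 2 - c * s))]
        exact Finset.sum_congr rfl fun u _ => by
          simp only [Equiv.coe_addRight]
          rw [step u]
    _ = χ (-(c ^ 2 / (4 * ℓ))) * ∑ u : F, χ (ℓ * u ^ 2) := by
        simp_rw [AddChar.map_add_eq_mul]
        rw [← Finset.sum_mul]
        ring
    _ = _ := by rw [sum_chi_sq hchar χ hχ hℓ]

private lemma final_div {q A B C : ℂ} (hq : q ≠ 0) (d : ℕ) (key : q * A = C * q ^ d + B) :
    A / q ^ d = C / q + B / q ^ (d + 1) := by
  have hqd : q ^ d ≠ 0 := pow_ne_zero _ hq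
  have hqd1 : q ^ (d + 1) ≠ 0 := pow_ne_zero _ hq
  field_simp
  ring_nf
  linear_combination q ^ d * q * key

end aux

/-- Explicit formula for the normalized Fourier transform of the sphere `S_t` in even
dimension `d`:
`Ŝ_t(m) = q^{-1} δ₀(m) + q^{-d-1} G^d ∑_{ℓ≠0} χ(tℓ + ‖m‖/(4ℓ))`,
where `G` is the Gauss sum associated with the quadratic character. -/
theorem stmt3 {F : Type*} [Field F] [Fintype F] [DecidableEq F] (hchar : ringChar F ≠ 2)
    (d : ℕ) (hd : 2 ≤ d) (hde : Even d)
    (χ : AddChar F ℂ) (hχ : χ ≠ 1) (t : F) (m : Fin d → F) :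
    (∑ x ∈ Finset.univ.filter (fun x : Fin d → F => ∑ i, x i ^ 2 = t),
        χ (-(∑ i, x i * m i))) / (Fintype.card F : ℂ) ^ d
      = (if m = 0 then 1 else 0) / (Fintype.card F : ℂ)
        + ((∑ s : F, ((quadraticChar F s : ℤ) : ℂ) * χ s) ^ d / (Fintype.card F : ℂ) ^ (d + 1)) *
          ∑ ℓ ∈ Finset.univ.filter (fun ℓ : F => ℓ ≠ 0),
            χ (t * ℓ + (∑ i, m i ^ 2) / (4 * ℓ)) := by
  set q : ℂ := (Fintype.card F : ℂ) with hqdef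
  set G : ℂ := ∑ s : F, ((quadraticChar F s : ℤ) : ℂ) * χ s with hGdef
  have hq : q ≠ 0 := by
    simp only [hqdef, Ne, Nat.cast_eq_zero]
    exact Fintype.card_ne_zero
  -- inner sum over the whole space, for ℓ ≠ 0
  have inner_ne : ∀ ℓ : F, ℓ ≠ 0 →
      ∑ x : Fin d → F, χ (ℓ * (∑ i, x i ^ 2) - ∑ i, x i * m i)
        = χ (-((∑ i, m i ^ 2) / (4 * ℓ))) * G ^ d := by
    intro ℓ hℓ
    have hsplit : ∀ x : Fin d → F,
        ℓ * (∑ i, x i ^ 2) - ∑ i, x i * m i = ∑ i, (ℓ * x i ^ 2 - m i * x i) := by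
      intro x
      rw [Finset.mul_sum, ← Finset.sum_sub_distrib]
      exact Finset.sum_congr rfl fun i _ => by ring
    have heta : ((quadraticChar F ℓ : ℤ) : ℂ) ^ d = 1 := by
      obtain ⟨k, hk⟩ := hde
      rw [hk, pow_add, ← mul_pow, quad_cast_sq hℓ, one_pow]
    calc ∑ x : Fin d → F, χ (ℓ * (∑ i, x i ^ 2) - ∑ i, x i * m i)
        = ∑ x : Fin d → F, ∏ i, χ (ℓ * x i ^ 2 - m i * x i) := by
          refine Finset.sum_congr rfl fun x _ => ?_
          rw [hsplit x, addChar_map_sum]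
      _ = ∏ i, ∑ s : F, χ (ℓ * s ^ 2 - m i * s) :=
          (Fintype.prod_sum (fun i (s : F) => χ (ℓ * s ^ 2 - m i * s))).symm
      _ = ∏ i, χ (-(m i ^ 2 / (4 * ℓ))) * (((quadraticChar F ℓ : ℤ) : ℂ) * G) :=
          Finset.prod_congr rfl fun i _ => sum_complete_sq hchar χ hχ hℓ (m i)
      _ = (∏ i, χ (-(m i ^ 2 / (4 * ℓ)))) * (((quadraticChar F ℓ : ℤ) : ℂ) * G) ^ d := by
          rw [Finset.prod_mul_distrib, Finset.prod_const, Finset.card_univ, Fintype.card_fin]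
      _ = χ (-((∑ i, m i ^ 2) / (4 * ℓ))) * G ^ d := by
          rw [← addChar_map_sum, mul_pow, heta, one_mul]
          congr 2
          rw [Finset.sum_div]
          simp
  -- inner sum for ℓ = 0
  have inner_zero : ∑ x : Fin d → F, χ (-(∑ i, x i * m i))
      = if m = 0 then q ^ d else 0 := by
    have hx : ∀ x : Fin d → F, χ (-(∑ i, x i * m i)) = ∏ i, χ (x i * (-(m i))) := by
      intro x
      rw [← addChar_map_sum]
      congr 1
      rw [← Finset.sum_neg_distrib]
      exact Finset.sum_congr rfl fun i _ => by ring
    simp_rw [hx]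
    rw [← Fintype.prod_sum (fun i (s : F) => χ (s * (-(m i))))]
    by_cases hm : m = 0
    · rw [if_pos hm]
      have hmi : ∀ i, m i = 0 := fun i => congrFun hm i
      calc ∏ i : Fin d, ∑ s : F, χ (s * (-(m i)))
          = ∏ _i : Fin d, q := by
            refine Finset.prod_congr rfl fun i _ => ?_
            rw [sum_char_mul χ hχ, if_pos (by rw [hmi i, neg_zero])]
        _ = q ^ d := by rw [Finset.prod_const, Finset.card_univ, Fintype.card_fin]
    · rw [if_neg hm]
      obtain ⟨i, hi⟩ := Function.ne_iff.mp hm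
      refine Finset.prod_eq_zero (Finset.mem_univ i) ?_
      rw [sum_char_mul χ hχ, if_neg (by simpa using hi)]
  -- the key identity
  have key : q * (∑ x ∈ Finset.univ.filter (fun x : Fin d → F => ∑ i, x i ^ 2 = t),
        χ (-(∑ i, x i * m i)))
      = (if m = 0 then 1 else 0) * q ^ d
        + G ^ d * ∑ ℓ ∈ Finset.univ.filter (fun ℓ : F => ℓ ≠ 0),
            χ (t * ℓ + (∑ i, m i ^ 2) / (4 * ℓ)) := by
    have expand : ∀ x : Fin d → F,
        (if (∑ i, x i ^ 2) = t then q else 0) = ∑ ℓ : F, χ (ℓ * ((∑ i, x i ^ 2) - t)) := by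
      intro x
      rw [sum_char_mul χ hχ]
      simp only [sub_eq_zero]
      rfl
    calc q * (∑ x ∈ Finset.univ.filter (fun x : Fin d → F => ∑ i, x i ^ 2 = t),
            χ (-(∑ i, x i * m i)))
        = ∑ x : Fin d → F,
            (if (∑ i, x i ^ 2) = t then q else 0) * χ (-(∑ i, x i * m i)) := by
          rw [Finset.sum_filter, Finset.mul_sum]
          refine Finset.sum_congr rfl fun x _ => ?_
          split_ifs <;> simp
      _ = ∑ x : Fin d → F, ∑ ℓ : F,
            χ (ℓ * ((∑ i, x i ^ 2) - t)) * χ (-(∑ i, x i * m i)) := by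
          refine Finset.sum_congr rfl fun x _ => ?_
          rw [expand x, Finset.sum_mul]
      _ = ∑ ℓ : F, χ (-(t * ℓ)) * ∑ x : Fin d → F,
            χ (ℓ * (∑ i, x i ^ 2) - ∑ i, x i * m i) := by
          rw [Finset.sum_comm]
          refine Finset.sum_congr rfl fun ℓ _ => ?_
          rw [Finset.mul_sum]
          refine Finset.sum_congr rfl fun x _ => ?_
          rw [← AddChar.map_add_eq_mul, ← AddChar.map_add_eq_mul]
          congr 1
          ring
      _ = χ (-(t * 0)) * (∑ x : Fin d → F,
              χ (0 * (∑ i, x i ^ 2) - ∑ i, x i * m i))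
            + ∑ ℓ ∈ Finset.univ.erase 0, χ (-(t * ℓ)) * ∑ x : Fin d → F,
              χ (ℓ * (∑ i, x i ^ 2) - ∑ i, x i * m i) :=
          (Finset.add_sum_erase _ _ (Finset.mem_univ (0 : F))).symm
      _ = (if m = 0 then 1 else 0) * q ^ d
          + G ^ d * ∑ ℓ ∈ Finset.univ.filter (fun ℓ : F => ℓ ≠ 0),
              χ (t * ℓ + (∑ i, m i ^ 2) / (4 * ℓ)) := by
          congr 1
          · simp only [mul_zero, neg_zero, AddChar.map_zero_eq_one, one_mul, zero_mul, zero_sub]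
            rw [inner_zero]
            split_ifs <;> simp
          · rw [Finset.filter_ne' Finset.univ (0 : F)]
            have hterm : ∀ ℓ ∈ Finset.univ.erase (0 : F),
                χ (-(t * ℓ)) * ∑ x : Fin d → F, χ (ℓ * (∑ i, x i ^ 2) - ∑ i, x i * m i)
                  = G ^ d * χ (-(t * ℓ) + -((∑ i, m i ^ 2) / (4 * ℓ))) := by
              intro ℓ hℓ
              have hℓ0 : ℓ ≠ 0 := Finset.ne_of_mem_erase hℓ
              rw [inner_ne ℓ hℓ0, AddChar.map_add_eq_mul]
              ring
            rw [Finset.sum_congr rfl hterm, ← Finset.mul_sum]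
            congr 1
            refine Finset.sum_nbij' (fun ℓ => -ℓ) (fun ℓ => -ℓ) ?_ ?_ ?_ ?_ ?_
            · intro a ha
              simpa using Finset.ne_of_mem_erase ha
            · intro a ha
              simpa using Finset.ne_of_mem_erase ha
            · intro a _; simp
            · intro a _; simp
            · intro a _
              congr 1
              rw [mul_neg, mul_neg, div_neg]
  have final := final_div hq d key
  rw [final]
  ring
end

section
/- For any m, v ∈ F_q^d, ∑_{t∈F_q} Ŝ_t(m) · conj(Ŝ_t(v)) = q^{-1} δ_0(m) δ_0(v) + q^{-d-1} ∑_{s∈F_q^*} χ(s(‖m‖ − ‖v‖)), where Ŝ_t is the normalized Fourier transform of the indicator of the sphere S_t = {x ∈ F_q^d : ‖x‖ = t}. -/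
open Finset

set_option maxHeartbeats 1000000

private lemma char_sum_mul {F : Type*} [Field F] [Fintype F] [DecidableEq F]
    (χ : AddChar F ℂ) (hχ : χ ≠ 1) (a : F) :
    ∑ s : F, χ (s * a) = if a = 0 then (Fintype.card F : ℂ) else 0 := by
  simpa using AddChar.sum_mulShift a (AddChar.IsPrimitive.of_ne_one hχ)

private lemma char_map_sum {F : Type*} [Field F] {ι : Type*} (χ : AddChar F ℂ)
    (s : Finset ι) (f : ι → F) :
    χ (∑ i ∈ s, f i) = ∏ i ∈ s, χ (f i) := by
  induction s using Finset.cons_induction with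
  | empty => simp
  | cons a s ha ih => simp [Finset.sum_cons, Finset.prod_cons, AddChar.map_add_eq_mul, ih]

private lemma char_vec_sum {F : Type*} [Field F] [Fintype F] [DecidableEq F]
    (χ : AddChar F ℂ) (hχ : χ ≠ 1) (d : ℕ) (w : Fin d → F) :
    ∑ x : Fin d → F, χ (∑ i, x i * w i) =
      if w = 0 then ((Fintype.card F : ℂ)) ^ d else 0 := by
  calc ∑ x : Fin d → F, χ (∑ i, x i * w i)
      = ∑ x ∈ Fintype.piFinset (fun _ : Fin d => (univ : Finset F)),
          ∏ i, χ (x i * w i) := by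
        rw [Fintype.piFinset_univ]
        exact Finset.sum_congr rfl fun x _ => char_map_sum χ _ _
    _ = ∏ i : Fin d, ∑ a : F, χ (a * w i) :=
        (Finset.prod_univ_sum (fun _ : Fin d => (univ : Finset F))
          (fun i a => χ (a * w i))).symm
    _ = ∏ i : Fin d, (if w i = 0 then (Fintype.card F : ℂ) else 0) :=
        Finset.prod_congr rfl fun i _ => char_sum_mul χ hχ (w i)
    _ = if w = 0 then ((Fintype.card F : ℂ)) ^ d else 0 := by
        by_cases hw : w = 0
        · simp [hw]
        · rw [if_neg hw]
          obtain ⟨i, hi⟩ := Function.ne_iff.mp hw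
          refine Finset.prod_eq_zero (mem_univ i) ?_
          rw [if_neg (by simpa using hi)]

/-- Lemma 2.3: for any `m, v ∈ F_q^d`,
`∑_t Ŝ_t(m) conj(Ŝ_t(v)) = q^{-1} δ₀(m) δ₀(v) + q^{-d-1} ∑_{s≠0} χ(s(‖m‖-‖v‖))`. -/
theorem stmt4 {F : Type*} [Field F] [Fintype F] [DecidableEq F] (hchar : ringChar F ≠ 2)
    (d : ℕ) (hd : 1 ≤ d) (χ : AddChar F ℂ) (hχ : χ ≠ 1) (m v : Fin d → F) :
    ∑ t : F,
        ((∑ x ∈ Finset.univ.filter (fun x : Fin d → F => ∑ i, x i ^ 2 = t),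
            χ (-(∑ i, x i * m i))) / (Fintype.card F : ℂ) ^ d) *
        (starRingEnd ℂ)
          ((∑ x ∈ Finset.univ.filter (fun x : Fin d → F => ∑ i, x i ^ 2 = t),
            χ (-(∑ i, x i * v i))) / (Fintype.card F : ℂ) ^ d)
      = (if m = 0 then 1 else 0) * (if v = 0 then 1 else 0) / (Fintype.card F : ℂ)
        + (∑ s ∈ Finset.univ.filter (fun s : F => s ≠ 0),
            χ (s * ((∑ i, m i ^ 2) - ∑ i, v i ^ 2))) / (Fintype.card F : ℂ) ^ (d + 1) := by
  classical
  set q : ℂ := (Fintype.card F : ℂ) with hqdef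
  have hq0 : q ≠ 0 := Nat.cast_ne_zero.mpr Fintype.card_ne_zero
  have h2 : (2 : F) ≠ 0 := Ring.two_ne_zero hchar
  have h4 : (4 : F) ≠ 0 := by
    have h : (4 : F) = 2 * 2 := by norm_num
    rw [h]; exact mul_ne_zero h2 h2
  have hcharpos : 0 < ringChar F := Nat.pos_of_ne_zero (CharP.ringChar_ne_zero_of_finite F)
  have hconj : ∀ a : F, (starRingEnd ℂ) (χ a) = χ (-a) := by
    intro a
    rw [AddChar.starComp_apply hcharpos, AddChar.inv_apply]
  set N : (Fin d → F) → F := fun x => ∑ i, x i ^ 2 with hN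
  -- Step A: remove conjugation
  have stepA : ∀ t : F,
      ((∑ x ∈ Finset.univ.filter (fun x : Fin d → F => N x = t),
          χ (-(∑ i, x i * m i))) / q ^ d) *
      (starRingEnd ℂ)
        ((∑ x ∈ Finset.univ.filter (fun x : Fin d → F => N x = t),
            χ (-(∑ i, x i * v i))) / q ^ d)
      = ((∑ x ∈ Finset.univ.filter (fun x : Fin d → F => N x = t),
            χ (-(∑ i, x i * m i))) *
         (∑ y ∈ Finset.univ.filter (fun y : Fin d → F => N y = t),
            χ (∑ i, y i * v i))) / (q ^ d * q ^ d) := by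
    intro t
    rw [map_div₀, map_sum]
    have hcq : (starRingEnd ℂ) (q ^ d) = q ^ d := by
      simp [hqdef]
    rw [hcq, div_mul_div_comm]
    congr 1
    congr 1
    exact Finset.sum_congr rfl fun y _ => by rw [hconj, neg_neg]
  rw [Finset.sum_congr rfl fun t _ => stepA t, ← Finset.sum_div]
  -- Step B: collapse the t-sum
  set S : ℂ := ∑ x : Fin d → F, ∑ y : Fin d → F,
      (if N y = N x then (1 : ℂ) else 0) * (χ (-(∑ i, x i * m i)) * χ (∑ i, y i * v i))
      with hS
  have stepB : (∑ t : F,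
      (∑ x ∈ Finset.univ.filter (fun x : Fin d → F => N x = t),
          χ (-(∑ i, x i * m i))) *
      (∑ y ∈ Finset.univ.filter (fun y : Fin d → F => N y = t),
          χ (∑ i, y i * v i))) = S := by
    have h1 : ∀ t : F,
        (∑ x ∈ Finset.univ.filter (fun x : Fin d → F => N x = t),
            χ (-(∑ i, x i * m i))) *
        (∑ y ∈ Finset.univ.filter (fun y : Fin d → F => N y = t),
            χ (∑ i, y i * v i))
        = ∑ x ∈ Finset.univ.filter (fun x : Fin d → F => N x = t),
            (χ (-(∑ i, x i * m i)) *
              ∑ y ∈ Finset.univ.filter (fun y : Fin d → F => N y = N x),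
                χ (∑ i, y i * v i)) := by
      intro t
      rw [Finset.sum_mul]
      refine Finset.sum_congr rfl fun x hx => ?_
      rw [Finset.mem_filter] at hx
      rw [hx.2]
    rw [Finset.sum_congr rfl fun t _ => h1 t]
    rw [Finset.sum_fiberwise_of_maps_to (fun x _ => Finset.mem_univ (N x))]
    refine Finset.sum_congr rfl fun x _ => ?_
    rw [Finset.sum_filter, Finset.mul_sum]
    refine Finset.sum_congr rfl fun y _ => ?_
    by_cases h : N y = N x <;> simp [h, mul_comm]
  rw [stepB]
  -- Step C: introduce the sum over s
  set T : F → ℂ := fun s => ∑ x : Fin d → F, ∑ y : Fin d → F,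
      χ ((s * N x - ∑ i, x i * m i) + ((∑ i, y i * v i) - s * N y)) with hT
  have key : ∀ x y : Fin d → F,
      (∑ s : F, χ ((s * N x - ∑ i, x i * m i) + ((∑ i, y i * v i) - s * N y)))
      = (if N y = N x then (1 : ℂ) else 0)
          * (χ (-(∑ i, x i * m i)) * χ (∑ i, y i * v i)) * q := by
    intro x y
    have hsplit : ∀ s : F,
        χ ((s * N x - ∑ i, x i * m i) + ((∑ i, y i * v i) - s * N y))
        = χ (s * (N x - N y)) * (χ (-(∑ i, x i * m i)) * χ (∑ i, y i * v i)) := by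
      intro s
      rw [← AddChar.map_add_eq_mul, ← AddChar.map_add_eq_mul]
      congr 1
      ring
    rw [Finset.sum_congr rfl fun s _ => hsplit s, ← Finset.sum_mul,
      char_sum_mul χ hχ (N x - N y)]
    by_cases h : N y = N x
    · rw [if_pos (sub_eq_zero.mpr h.symm), if_pos h]
      ring
    · rw [if_neg (fun hc => h (sub_eq_zero.mp hc).symm), if_neg h]
      ring
  have stepC : (∑ s : F, T s) = S * q := by
    calc (∑ s : F, T s)
        = ∑ x : Fin d → F, ∑ s : F, ∑ y : Fin d → F,
            χ ((s * N x - ∑ i, x i * m i) + ((∑ i, y i * v i) - s * N y)) := by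
          simp only [hT]; exact Finset.sum_comm
      _ = ∑ x : Fin d → F, ∑ y : Fin d → F, ∑ s : F,
            χ ((s * N x - ∑ i, x i * m i) + ((∑ i, y i * v i) - s * N y)) :=
          Finset.sum_congr rfl fun x _ => Finset.sum_comm
      _ = ∑ x : Fin d → F, ∑ y : Fin d → F,
            (if N y = N x then (1 : ℂ) else 0)
              * (χ (-(∑ i, x i * m i)) * χ (∑ i, y i * v i)) * q :=
          Finset.sum_congr rfl fun x _ => Finset.sum_congr rfl fun y _ => key x y
      _ = S * q := by
          rw [hS, Finset.sum_mul]
          exact Finset.sum_congr rfl fun x _ => by rw [Finset.sum_mul]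
  have stepC' : S = (∑ s : F, T s) / q := by
    rw [eq_div_iff hq0, ← stepC]
  rw [stepC']
  -- value at s = 0
  have hT0 : T 0 = (if m = 0 then q ^ d else 0) * (if v = 0 then q ^ d else 0) := by
    simp only [hT]
    simp only [zero_mul, zero_sub, sub_zero, zero_add]
    have h2' : ∀ x y : Fin d → F,
        χ (-(∑ i, x i * m i) + (∑ i, y i * v i))
        = χ (∑ i, x i * (-m) i) * χ (∑ i, y i * v i) := by
      intro x y
      rw [← AddChar.map_add_eq_mul]
      congr 2
      rw [← Finset.sum_neg_distrib]
      exact Finset.sum_congr rfl fun i _ => by rw [Pi.neg_apply]; ring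
    rw [Finset.sum_congr rfl fun x _ => Finset.sum_congr rfl fun y _ => h2' x y]
    rw [← Finset.sum_mul_sum]
    rw [char_vec_sum χ hχ d (-m), char_vec_sum χ hχ d v]
    congr 1
    simp [neg_eq_zero, hqdef]
  -- value at s ≠ 0
  have hTs : ∀ s : F, s ≠ 0 → T s = q ^ d * χ ((4 * s)⁻¹ * (N v - N m)) := by
    intro s hs
    have h2s : (2 : F) * s ≠ 0 := mul_ne_zero h2 hs
    set u0 : Fin d → F := ((2 : F) * s)⁻¹ • (v - m) with hu0
    have reindex : ∀ x : Fin d → F,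
        (∑ y : Fin d → F, χ ((s * N x - ∑ i, x i * m i) + ((∑ i, y i * v i) - s * N y)))
        = ∑ u : Fin d → F,
            χ ((∑ i, x i * (v - m - ((2 : F) * s) • u) i) + ((∑ i, u i * v i) - s * N u)) := by
      intro x
      rw [← Equiv.sum_comp (Equiv.addLeft x)
        (fun y => χ ((s * N x - ∑ i, x i * m i) + ((∑ i, y i * v i) - s * N y)))]
      refine Finset.sum_congr rfl fun u _ => ?_
      congr 1
      simp only [hN, Equiv.coe_addLeft, Pi.add_apply, Pi.sub_apply, Pi.smul_apply, smul_eq_mul,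
        Finset.mul_sum, ← Finset.sum_sub_distrib, ← Finset.sum_add_distrib]
      exact Finset.sum_congr rfl fun i _ => by ring
    simp only [hT]
    rw [Finset.sum_congr rfl fun x _ => reindex x, Finset.sum_comm]
    have inner : ∀ u : Fin d → F,
        (∑ x : Fin d → F,
            χ ((∑ i, x i * (v - m - ((2 : F) * s) • u) i) + ((∑ i, u i * v i) - s * N u)))
        = (if u = u0 then q ^ d else 0) * χ ((∑ i, u i * v i) - s * N u) := by
      intro u
      rw [Finset.sum_congr rfl fun x _ => AddChar.map_add_eq_mul χ _ _, ← Finset.sum_mul,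
        char_vec_sum χ hχ d (v - m - ((2 : F) * s) • u)]
      congr 1
      have hiff : v - m - ((2 : F) * s) • u = 0 ↔ u = u0 := by
        rw [sub_eq_zero, ← inv_smul_eq_iff₀ h2s, ← hu0, eq_comm]
      exact if_congr hiff rfl rfl
    rw [Finset.sum_congr rfl fun u _ => inner u]
    have hite : ∀ u : Fin d → F,
        (if u = u0 then q ^ d else 0) * χ ((∑ i, u i * v i) - s * N u)
        = if u = u0 then q ^ d * χ ((∑ i, u i * v i) - s * N u) else 0 := by
      intro u; split <;> simp
    rw [Finset.sum_congr rfl fun u _ => hite u, Finset.sum_ite_eq' univ u0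
      (fun u => q ^ d * χ ((∑ i, u i * v i) - s * N u)), if_pos (mem_univ u0)]
    congr 2
    have hdot : (∑ i, u0 i * v i) = ((2 : F) * s)⁻¹ * (N v - ∑ i, m i * v i) := by
      have e2 : (∑ i, v i ^ 2) - (∑ i, m i * v i) = ∑ i, (v i ^ 2 - m i * v i) :=
        by rw [Finset.sum_sub_distrib]
      simp only [hN]
      rw [e2, Finset.mul_sum]
      simp only [hu0, Pi.smul_apply, Pi.sub_apply, smul_eq_mul]
      exact Finset.sum_congr rfl fun i _ => by ring
    have hNu0 : N u0 = (((2 : F) * s)⁻¹) ^ 2 * (N v - 2 * (∑ i, m i * v i) + N m) := by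
      have e1 : (∑ i, v i ^ 2) - 2 * (∑ i, m i * v i) + (∑ i, m i ^ 2)
          = ∑ i, (v i ^ 2 - 2 * (m i * v i) + m i ^ 2) := by
        rw [Finset.mul_sum, ← Finset.sum_sub_distrib, ← Finset.sum_add_distrib]
      simp only [hN]
      rw [e1, Finset.mul_sum]
      simp only [hu0, Pi.smul_apply, Pi.sub_apply, smul_eq_mul]
      exact Finset.sum_congr rfl fun i _ => by ring
    rw [hdot, hNu0]
    field_simp
    ring
  -- split off s = 0 and reindex the nonzero part
  have hsplit0 : (∑ s : F, T s) = T 0 + ∑ s ∈ Finset.univ.filter (fun s : F => s ≠ 0), T s := by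
    rw [Finset.filter_ne', ← Finset.sum_erase_add univ T (mem_univ (0 : F))]
    ring
  have hbij : (∑ s ∈ Finset.univ.filter (fun s : F => s ≠ 0), χ ((4 * s)⁻¹ * (N v - N m)))
      = ∑ s ∈ Finset.univ.filter (fun s : F => s ≠ 0), χ (s * (N m - N v)) := by
    refine Finset.sum_nbij' (fun s => -(4 * s)⁻¹) (fun s => -(4 * s)⁻¹) ?_ ?_ ?_ ?_ ?_
    · intro s hs
      rw [Finset.mem_filter] at hs ⊢
      exact ⟨mem_univ _, neg_ne_zero.mpr (inv_ne_zero (mul_ne_zero h4 hs.2))⟩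
    · intro s hs
      rw [Finset.mem_filter] at hs ⊢
      exact ⟨mem_univ _, neg_ne_zero.mpr (inv_ne_zero (mul_ne_zero h4 hs.2))⟩
    · intro s hs
      rw [Finset.mem_filter] at hs
      field_simp
    · intro s hs
      rw [Finset.mem_filter] at hs
      field_simp
    · intro s hs
      rw [Finset.mem_filter] at hs
      congr 1
      ring
  have hTnz : (∑ s ∈ Finset.univ.filter (fun s : F => s ≠ 0), T s)
      = q ^ d * ∑ s ∈ Finset.univ.filter (fun s : F => s ≠ 0), χ (s * (N m - N v)) := by
    rw [Finset.sum_congr rfl fun s hs => hTs s (Finset.mem_filter.mp hs).2, ← Finset.mul_sum,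
      hbij]
  rw [hsplit0, hT0, hTnz]
  have hNm : N m = ∑ i, m i ^ 2 := rfl
  have hNv : N v = ∑ i, v i ^ 2 := rfl
  rw [hNm, hNv]
  by_cases hm : m = 0 <;> by_cases hv : v = 0 <;> simp only [hm, hv, if_true, if_false,
    eq_self_iff_true, if_pos, if_neg, not_false_iff] <;> field_simp <;> ring_nf <;> simp only [mul_comm, mul_left_comm, mul_assoc]
end

section
/- Second moment bound: for E_1,...,E_k ⊂ F_q^d with d, k ≥ 2, the counting function ν_k(t) = |{(x^1,...,x^k) ∈ E_1×...×E_k : ‖x^1+...+x^k‖ = t}| satisfies ∑_{t∈F_q} ν_k(t)^2 ≤ q^{-1}(∏_{j=1}^k |E_j|)^2 + q^{2dk−d} ∑_{r∈F_q} |∑_{v∈S_r} ∏_{j=1}^k Ê_j(v)|^2. -/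
open Finset

set_option linter.unusedSectionVars false
set_option maxHeartbeats 1000000

section Aux

variable {F : Type*} [Field F] [Fintype F] [DecidableEq F]

private lemma chi_sum {M : Type*} [CommMonoid M] (χ : AddChar F M) {ι : Type*} (s : Finset ι)
    (f : ι → F) : χ (∑ i ∈ s, f i) = ∏ i ∈ s, χ (f i) := by
  classical
  induction s using Finset.cons_induction with
  | empty => simp
  | cons a s ha ih => rw [Finset.sum_cons, Finset.prod_cons, AddChar.map_add_eq_mul, ih]

private lemma orth1 {χ : AddChar F ℂ} (hχ : χ ≠ 1) (x : F) :
    ∑ a : F, χ (a * x) = if x = 0 then (Fintype.card F : ℂ) else 0 := by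
  rw [AddChar.sum_mulShift x (AddChar.IsPrimitive.of_ne_one hχ)]
  split_ifs <;> simp

private lemma conj_chi (χ : AddChar F ℂ) (a : F) : (starRingEnd ℂ) (χ a) = χ (-a) := by
  have h : 0 < ringChar F := Nat.pos_of_ne_zero (CharP.ringChar_ne_zero_of_finite F)
  rw [AddChar.starComp_apply h, AddChar.inv_apply]

private lemma orthV {χ : AddChar F ℂ} (hχ : χ ≠ 1) {d : ℕ} (y : Fin d → F) :
    ∑ m : Fin d → F, χ (∑ i, m i * y i)
      = if y = 0 then (Fintype.card F : ℂ) ^ d else 0 := by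
  simp_rw [chi_sum χ univ]
  rw [← Fintype.prod_sum (fun i (u : F) => χ (u * y i))]
  by_cases hy : y = 0
  · simp [hy, if_pos, orth1 hχ]
  · rw [if_neg hy]
    obtain ⟨i, hi⟩ : ∃ i, y i ≠ 0 := by
      by_contra h
      push_neg at h
      exact hy (funext fun i => h i)
    exact Finset.prod_eq_zero (mem_univ i) (by rw [orth1 hχ, if_neg hi])

private lemma parsevalC {χ : AddChar F ℂ} (hχ : χ ≠ 1) (f : F → ℂ) :
    ∑ a : F, (∑ t : F, χ (a * t) * f t) * (starRingEnd ℂ) (∑ t : F, χ (a * t) * f t)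
      = (Fintype.card F : ℂ) * ∑ t : F, f t * (starRingEnd ℂ) (f t) := by
  have key : ∀ a : F, (∑ t : F, χ (a * t) * f t) * (starRingEnd ℂ) (∑ t : F, χ (a * t) * f t)
      = ∑ t : F, ∑ t' : F, χ (a * (t - t')) * (f t * (starRingEnd ℂ) (f t')) := by
    intro a
    rw [map_sum (starRingEnd ℂ), Finset.sum_mul_sum]
    refine Finset.sum_congr rfl fun t _ => Finset.sum_congr rfl fun t' _ => ?_
    rw [RingHom.map_mul (starRingEnd ℂ), conj_chi,
      show a * (t - t') = a * t + -(a * t') by ring, AddChar.map_add_eq_mul]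
    ring
  simp_rw [key]
  rw [Finset.sum_comm]
  have step : ∀ t : F, ∑ a : F, ∑ t' : F, χ (a * (t - t')) * (f t * (starRingEnd ℂ) (f t'))
      = (Fintype.card F : ℂ) * (f t * (starRingEnd ℂ) (f t)) := by
    intro t
    rw [Finset.sum_comm]
    have h1 : ∀ t' : F, ∑ a : F, χ (a * (t - t')) * (f t * (starRingEnd ℂ) (f t'))
        = (if t = t' then (Fintype.card F : ℂ) else 0) * (f t * (starRingEnd ℂ) (f t')) := by
      intro t'
      rw [← Finset.sum_mul, orth1 hχ]
      simp only [sub_eq_zero]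
    simp_rw [h1, ite_mul, zero_mul]
    rw [Finset.sum_ite_eq univ t (fun t' => (Fintype.card F : ℂ) * (f t * (starRingEnd ℂ) (f t')))]
    simp
  simp_rw [step]
  rw [← Finset.mul_sum]

private lemma parseval_normSq {χ : AddChar F ℂ} (hχ : χ ≠ 1) (f : F → ℂ) :
    ∑ a : F, Complex.normSq (∑ t : F, χ (a * t) * f t)
      = (Fintype.card F : ℝ) * ∑ t : F, Complex.normSq (f t) := by
  have h := parsevalC hχ f
  simp_rw [Complex.mul_conj] at h
  exact_mod_cast h

private lemma gauss_normSq {χ : AddChar F ℂ} (hχ : χ ≠ 1) (h2 : (2 : F) ≠ 0) {a : F}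
    (ha : a ≠ 0) :
    Complex.normSq (∑ u : F, χ (a * u ^ 2)) = (Fintype.card F : ℝ) := by
  have h4 : (4 : F) * a ≠ 0 := by
    have h4' : (4 : F) ≠ 0 := by
      have : (4 : F) = 2 * 2 := by norm_num
      rw [this]; exact mul_ne_zero h2 h2
    exact mul_ne_zero h4' ha
  have key : ((Complex.normSq (∑ u : F, χ (a * u ^ 2)) : ℂ))
      = (Fintype.card F : ℂ) := by
    rw [← Complex.mul_conj, map_sum, Finset.sum_mul_sum]
    simp_rw [conj_chi]
    have h1 : ∀ u v : F, χ (a * u ^ 2) * χ (-(a * v ^ 2)) = χ (a * (u ^ 2 - v ^ 2)) := by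
      intro u v
      rw [← AddChar.map_add_eq_mul]
      congr 1
      ring
    simp_rw [h1]
    rw [← Fintype.sum_prod_type']
    have hinj : Function.Injective (fun w : F × F => (w.1 + w.2, w.1 - w.2)) := by
      rintro ⟨a1, a2⟩ ⟨b1, b2⟩ h
      simp only [Prod.mk.injEq] at h ⊢
      obtain ⟨h1', h2'⟩ := h
      have e1 : 2 * a1 = 2 * b1 := by linear_combination h1' + h2'
      have e2 : 2 * a2 = 2 * b2 := by linear_combination h1' - h2'
      exact ⟨mul_left_cancel₀ h2 e1, mul_left_cancel₀ h2 e2⟩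
    have hsum : (∑ w : F × F, χ (w.1 * (4 * a * w.2)))
        = ∑ z : F × F, χ (a * (z.1 ^ 2 - z.2 ^ 2)) :=
      Fintype.sum_bijective _ (Finite.injective_iff_bijective.mp hinj)
        (fun w : F × F => χ (w.1 * (4 * a * w.2)))
        (fun z : F × F => χ (a * (z.1 ^ 2 - z.2 ^ 2)))
        (fun w => by
          show χ (w.1 * (4 * a * w.2)) = χ (a * ((w.1 + w.2) ^ 2 - (w.1 - w.2) ^ 2))
          congr 1
          ring)
    have hsum2 : (∑ w : F × F, χ (w.1 * (4 * a * w.2)))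
        = ∑ w1 : F, ∑ w2 : F, χ (w1 * (4 * a * w2)) :=
      Fintype.sum_prod_type' (f := fun w1 w2 => χ (w1 * (4 * a * w2)))
    rw [← hsum, hsum2]
    have h3 : ∀ w2 : F, ∑ w1 : F, χ (w1 * (4 * a * w2))
        = if w2 = 0 then (Fintype.card F : ℂ) else 0 := by
      intro w2
      rw [orth1 hχ]
      congr 1
      simp only [eq_iff_iff]
      constructor
      · intro h
        rcases mul_eq_zero.mp h with h' | h'
        · exact absurd h' h4
        · exact h'
      · intro h; rw [h, mul_zero]
    calc ∑ w1 : F, ∑ w2 : F, χ (w1 * (4 * a * w2))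
        = ∑ w2 : F, ∑ w1 : F, χ (w1 * (4 * a * w2)) := Finset.sum_comm
      _ = ∑ w2 : F, if w2 = 0 then (Fintype.card F : ℂ) else 0 :=
          Finset.sum_congr rfl fun w2 _ => h3 w2
      _ = (Fintype.card F : ℂ) := by rw [Finset.sum_ite_eq' univ 0]; simp
  exact_mod_cast key

private lemma square_sum (χ : AddChar F ℂ) (h2 : (2 : F) ≠ 0) {a : F} (ha : a ≠ 0) (c : F) :
    ∑ u : F, χ (a * u ^ 2 + c * u)
      = χ (-(c ^ 2) * (4 * a)⁻¹) * ∑ u : F, χ (a * u ^ 2) := by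
  have h2a : (2 : F) * a ≠ 0 := mul_ne_zero h2 ha
  have h4a : (4 : F) * a ≠ 0 := by
    have : (4 : F) * a = 2 * (2 * a) := by ring
    rw [this]
    exact mul_ne_zero h2 h2a
  have key : ∀ v : F, a * (v - c * (2 * a)⁻¹) ^ 2 + c * (v - c * (2 * a)⁻¹)
      = -(c ^ 2) * (4 * a)⁻¹ + a * v ^ 2 := by
    intro v
    have h4 : (4 : F) ≠ 0 := left_ne_zero_of_mul h4a
    field_simp
    ring
  calc ∑ u : F, χ (a * u ^ 2 + c * u)
      = ∑ v : F, χ (a * (v - c * (2 * a)⁻¹) ^ 2 + c * (v - c * (2 * a)⁻¹)) :=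
        Fintype.sum_bijective (fun v : F => v - c * (2 * a)⁻¹)
          (Finite.injective_iff_bijective.mp (sub_left_injective))
          _ _ (fun v => rfl) |>.symm
    _ = ∑ v : F, χ (-(c ^ 2) * (4 * a)⁻¹) * χ (a * v ^ 2) := by
        simp_rw [key, AddChar.map_add_eq_mul]
    _ = _ := by rw [← Finset.mul_sum]

private lemma square_sum_vec (χ : AddChar F ℂ) (h2 : (2 : F) ≠ 0) {a : F} (ha : a ≠ 0)
    {d : ℕ} (m : Fin d → F) :
    ∑ s : Fin d → F, χ (∑ i, (a * s i ^ 2 + -(m i) * s i))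
      = χ (-(∑ i, m i ^ 2) * (4 * a)⁻¹) * (∑ u : F, χ (a * u ^ 2)) ^ d := by
  simp_rw [chi_sum χ univ]
  rw [← Fintype.prod_sum (fun i (u : F) => χ (a * u ^ 2 + -(m i) * u))]
  have step : ∀ i, ∑ u : F, χ (a * u ^ 2 + -(m i) * u)
      = χ (-(m i ^ 2) * (4 * a)⁻¹) * ∑ u : F, χ (a * u ^ 2) := by
    intro i
    rw [square_sum χ h2 ha (-(m i))]
    congr 2
    ring
  simp_rw [step]
  rw [Finset.prod_mul_distrib, Finset.prod_const, card_univ, Fintype.card_fin]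
  congr 1
  rw [← chi_sum χ univ (fun i => -(m i ^ 2) * (4 * a)⁻¹)]
  congr 1
  rw [← Finset.sum_mul]
  congr 1
  rw [Finset.sum_neg_distrib]

private lemma inversion (χ : AddChar F ℂ) (hχ : χ ≠ 1) (h2 : (2 : F) ≠ 0) {a : F} (ha : a ≠ 0)
    {d : ℕ} (w : Fin d → F) :
    (Fintype.card F : ℂ) ^ d * χ (a * ∑ i, w i ^ 2)
      = ∑ m : Fin d → F, χ (∑ i, m i * w i) *
          (χ (-(∑ i, m i ^ 2) * (4 * a)⁻¹) * (∑ u : F, χ (a * u ^ 2)) ^ d) := by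
  have way2 : ∀ m : Fin d → F,
      χ (∑ i, m i * w i) * (χ (-(∑ i, m i ^ 2) * (4 * a)⁻¹) * (∑ u : F, χ (a * u ^ 2)) ^ d)
        = ∑ s : Fin d → F, χ (∑ i, m i * w i) * χ (∑ i, (a * s i ^ 2 + -(m i) * s i)) := by
    intro m
    rw [← Finset.mul_sum, square_sum_vec χ h2 ha m]
  simp_rw [way2]
  rw [Finset.sum_comm]
  have way1 : ∀ s : Fin d → F,
      ∑ m : Fin d → F, χ (∑ i, m i * w i) * χ (∑ i, (a * s i ^ 2 + -(m i) * s i))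
        = χ (a * ∑ i, s i ^ 2) * (if s = w
            then (Fintype.card F : ℂ) ^ d else 0) := by
    intro s
    have harg : ∀ m : Fin d → F,
        χ (∑ i, m i * w i) * χ (∑ i, (a * s i ^ 2 + -(m i) * s i))
          = χ (a * ∑ i, s i ^ 2) * χ (∑ i, m i * (w i - s i)) := by
      intro m
      rw [← AddChar.map_add_eq_mul, ← AddChar.map_add_eq_mul]
      congr 1
      rw [Finset.mul_sum, ← Finset.sum_add_distrib, ← Finset.sum_add_distrib]
      exact Finset.sum_congr rfl fun i _ => by ring
    simp_rw [harg]
    rw [← Finset.mul_sum, orthV hχ]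
    have hcond : ((fun i => w i - s i) = 0) ↔ (s = w) := by
      constructor
      · intro h
        funext i
        have h' := congrFun h i
        simp only [Pi.zero_apply, sub_eq_zero] at h'
        exact h'.symm
      · intro h
        subst h
        funext i
        simp
    rw [if_congr hcond rfl rfl]
  simp_rw [way1]
  rw [Finset.sum_eq_single w]
  · rw [if_pos rfl, mul_comm]
  · intro s _ hs
    rw [if_neg hs, mul_zero]
  · intro h
    exact absurd (mem_univ w) h

end Aux
/-- Claim 3.3 (second moment bound):
`∑_t ν_k(t)² ≤ q^{-1} (∏ |E_j|)² + q^{2dk-d} ∑_r |∑_{v∈S_r} ∏_j Ê_j(v)|²`. -/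
theorem stmt7 {F : Type*} [Field F] [Fintype F] [DecidableEq F] (hchar : ringChar F ≠ 2)
    (d k : ℕ) (hd : 2 ≤ d) (hk : 2 ≤ k)
    (χ : AddChar F ℂ) (hχ : χ ≠ 1)
    (E : Fin k → Finset (Fin d → F)) :
    ∑ t : F,
        (((Finset.univ.filter (fun x : Fin k → Fin d → F =>
            (∀ j, x j ∈ E j) ∧ ∑ i, (∑ j, x j i) ^ 2 = t)).card : ℝ)) ^ 2
      ≤ (∏ j, ((E j).card : ℝ)) ^ 2 / (Fintype.card F : ℝ)
        + (Fintype.card F : ℝ) ^ (2 * d * k - d) *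
          ∑ r : F,
            ‖(∑ v ∈ Finset.univ.filter (fun v : Fin d → F => ∑ i, v i ^ 2 = r),
              ∏ j, (∑ x ∈ E j, χ (-(∑ i, x i * v i))) / (Fintype.card F : ℂ) ^ d)‖ ^ 2 := by
  classical
  have h2 : (2 : F) ≠ 0 := Ring.two_ne_zero hchar
  have h4 : (4 : F) ≠ 0 := by
    have h44 : (4 : F) = 2 * 2 := by norm_num
    rw [h44]; exact mul_ne_zero h2 h2
  have hqpos : 0 < Fintype.card F := Fintype.card_pos
  have hqR : (0 : ℝ) < (Fintype.card F : ℝ) := by exact_mod_cast hqpos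
  have hqR0 : (Fintype.card F : ℝ) ≠ 0 := hqR.ne'
  have hqdR : (0 : ℝ) < (Fintype.card F : ℝ) ^ d := pow_pos hqR d
  -- local definitions
  let Q : (Fin k → Fin d → F) → F := fun x => ∑ i, (∑ j, x j i) ^ 2
  let ν : F → ℕ := fun t => (univ.filter fun x : Fin k → Fin d → F =>
      (∀ j, x j ∈ E j) ∧ Q x = t).card
  let S : Fin k → (Fin d → F) → ℂ := fun j v => ∑ x ∈ E j, χ (-(∑ i, x i * v i))
  let D : F → ℂ := fun r =>
    ∑ v ∈ univ.filter (fun v : Fin d → F => ∑ i, v i ^ 2 = r), ∏ j, S j v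
  let M : F → ℂ := fun a => ∑ t : F, χ (a * t) * ((ν t : ℕ) : ℂ)
  let G : F → ℂ := fun a => ∑ u : F, χ (a * u ^ 2)
  let W : F → ℂ := fun b => ∑ r : F, χ (b * r) * D r
  -- Parseval for ν
  have hparse : ∑ a : F, Complex.normSq (M a)
      = (Fintype.card F : ℝ) * ∑ t : F, Complex.normSq ((ν t : ℂ)) :=
    parseval_normSq hχ (fun t => ((ν t : ℂ)))
  -- alternative representation of M
  have hM_alt : ∀ a : F, M a = ∑ x ∈ Fintype.piFinset E, χ (a * Q x) := by
    intro a
    show ∑ t : F, χ (a * t) * ((ν t : ℕ) : ℂ) = _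
    rw [← Finset.sum_fiberwise (Fintype.piFinset E) Q (fun x => χ (a * Q x))]
    refine Finset.sum_congr rfl fun t _ => ?_
    have hfilter : (Fintype.piFinset E).filter (fun x => Q x = t)
        = univ.filter (fun x : Fin k → Fin d → F => (∀ j, x j ∈ E j) ∧ Q x = t) := by
      ext x
      simp [Fintype.mem_piFinset]
    have hconst : ∑ x ∈ (Fintype.piFinset E).filter (fun x => Q x = t), χ (a * Q x)
        = ∑ x ∈ (Fintype.piFinset E).filter (fun x => Q x = t), χ (a * t) :=
      Finset.sum_congr rfl fun x hx => by rw [(Finset.mem_filter.1 hx).2]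
    rw [hconst, Finset.sum_const, nsmul_eq_mul, hfilter, mul_comm]
  -- value at 0
  have hM0 : Complex.normSq (M 0) = (∏ j, ((E j).card : ℝ)) ^ 2 := by
    have : M 0 = ((∏ j, (E j).card : ℕ) : ℂ) := by
      rw [hM_alt 0]
      have : ∀ x : Fin k → Fin d → F, χ (0 * Q x) = 1 := by
        intro x
        rw [zero_mul, AddChar.map_zero_eq_one]
      simp_rw [this]
      rw [Finset.sum_const, nsmul_eq_mul, mul_one, Fintype.card_piFinset]
    rw [this, Complex.normSq_natCast]
    push_cast
    ring
  -- key identity for a ≠ 0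
  have hkey : ∀ a : F, a ≠ 0 →
      ((Fintype.card F : ℂ)) ^ d * M a = G a ^ d * W (-(4 * a)⁻¹) := by
    intro a ha
    rw [hM_alt a, Finset.mul_sum]
    have hterm : ∀ x : Fin k → Fin d → F, (Fintype.card F : ℂ) ^ d * χ (a * Q x)
        = ∑ m : Fin d → F, χ (∑ i, m i * (∑ j, x j i)) *
            (χ (-(∑ i, m i ^ 2) * (4 * a)⁻¹) * G a ^ d) :=
      fun x => inversion χ hχ h2 ha (fun i => ∑ j, x j i)
    simp_rw [hterm]
    rw [Finset.sum_comm]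
    have hx : ∀ m : Fin d → F,
        ∑ x ∈ Fintype.piFinset E, χ (∑ i, m i * (∑ j, x j i)) = ∏ j, S j (-m) := by
      intro m
      have harg : ∀ x : Fin k → Fin d → F,
          χ (∑ i, m i * (∑ j, x j i)) = ∏ j, χ (∑ i, m i * x j i) := by
        intro x
        rw [show (∑ i, m i * (∑ j, x j i)) = ∑ j, ∑ i, m i * x j i by
          simp_rw [Finset.mul_sum]
          exact Finset.sum_comm]
        exact chi_sum χ univ _
      simp_rw [harg]
      have hswap := Finset.prod_univ_sum E (fun j (y : Fin d → F) => χ (∑ i, m i * y i))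
      rw [← hswap]
      refine Finset.prod_congr rfl fun j _ => ?_
      refine Finset.sum_congr rfl fun y _ => ?_
      congr 1
      show ∑ i, m i * y i = -(∑ i, y i * (-m) i)
      rw [← Finset.sum_neg_distrib]
      exact Finset.sum_congr rfl fun i _ => by simp [mul_comm]
    have hpull : ∀ m : Fin d → F,
        ∑ x ∈ Fintype.piFinset E, χ (∑ i, m i * (∑ j, x j i)) *
            (χ (-(∑ i, m i ^ 2) * (4 * a)⁻¹) * G a ^ d)
          = (∏ j, S j (-m)) * (χ (-(∑ i, m i ^ 2) * (4 * a)⁻¹) * G a ^ d) := by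
      intro m
      rw [← Finset.sum_mul, hx m]
    simp_rw [hpull]
    -- reindex m ↦ -m
    have hneg : ∑ m : Fin d → F,
        (∏ j, S j (-m)) * (χ (-(∑ i, m i ^ 2) * (4 * a)⁻¹) * G a ^ d)
          = ∑ m : Fin d → F,
        (∏ j, S j m) * (χ (-(∑ i, m i ^ 2) * (4 * a)⁻¹) * G a ^ d) :=
      Fintype.sum_bijective (fun m : Fin d → F => -m) neg_involutive.bijective _ _
        (fun m => by
          have hsq : (∑ i, (-m) i ^ 2) = ∑ i, m i ^ 2 :=
            Finset.sum_congr rfl fun i _ => by simp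
          show (∏ j, S j (-m)) * (χ (-(∑ i, m i ^ 2) * (4 * a)⁻¹) * G a ^ d)
            = (∏ j, S j (-m)) * (χ (-(∑ i, (-m) i ^ 2) * (4 * a)⁻¹) * G a ^ d)
          rw [hsq])
    rw [hneg]
    -- fiber over spheres
    rw [← Finset.sum_fiberwise univ (fun m : Fin d → F => ∑ i, m i ^ 2)
      (fun m => (∏ j, S j m) * (χ (-(∑ i, m i ^ 2) * (4 * a)⁻¹) * G a ^ d))]
    have hfib : ∀ r : F,
        ∑ m ∈ univ.filter (fun m : Fin d → F => ∑ i, m i ^ 2 = r),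
            (∏ j, S j m) * (χ (-(∑ i, m i ^ 2) * (4 * a)⁻¹) * G a ^ d)
          = D r * (χ (-r * (4 * a)⁻¹) * G a ^ d) := by
      intro r
      have : ∀ m ∈ univ.filter (fun m : Fin d → F => ∑ i, m i ^ 2 = r),
          (∏ j, S j m) * (χ (-(∑ i, m i ^ 2) * (4 * a)⁻¹) * G a ^ d)
            = (∏ j, S j m) * (χ (-r * (4 * a)⁻¹) * G a ^ d) := by
        intro m hm
        rw [(Finset.mem_filter.1 hm).2]
      rw [Finset.sum_congr rfl this, ← Finset.sum_mul]
    simp_rw [hfib]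
    rw [Finset.mul_sum]
    refine Finset.sum_congr rfl fun r _ => ?_
    rw [show (-r * (4 * a)⁻¹) = (-(4 * a)⁻¹) * r by ring]
    ring
  -- normSq of key identity
  have hnormM : ∀ a : F, a ≠ 0 →
      Complex.normSq (M a) = Complex.normSq (W (-(4 * a)⁻¹)) / (Fintype.card F : ℝ) ^ d := by
    intro a ha
    have h1 := congrArg Complex.normSq (hkey a ha)
    rw [map_mul, map_mul, map_pow, map_pow, gauss_normSq hχ h2 ha,
      Complex.normSq_natCast] at h1
    have hqq : ((Fintype.card F : ℝ) * (Fintype.card F : ℝ)) ^ d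
        = (Fintype.card F : ℝ) ^ d * (Fintype.card F : ℝ) ^ d := mul_pow _ _ d
    rw [hqq, mul_assoc] at h1
    have h3 := mul_left_cancel₀ (pow_ne_zero d hqR0) h1
    rw [eq_div_iff hqdR.ne', mul_comm]
    exact h3
  -- sum over nonzero a
  have herase : ∑ a ∈ univ.erase (0 : F), Complex.normSq (M a)
      ≤ (Fintype.card F : ℝ) * (∑ r : F, Complex.normSq (D r)) / (Fintype.card F : ℝ) ^ d := by
    have hstep1 : ∑ a ∈ univ.erase (0 : F), Complex.normSq (M a)
        = (∑ a ∈ univ.erase (0 : F), Complex.normSq (W (-(4 * a)⁻¹)))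
            / (Fintype.card F : ℝ) ^ d := by
      rw [Finset.sum_div]
      exact Finset.sum_congr rfl fun a ha => hnormM a (Finset.ne_of_mem_erase ha)
    rw [hstep1]
    have hinj : ∀ x ∈ univ.erase (0 : F), ∀ y ∈ univ.erase (0 : F),
        -(4 * x)⁻¹ = -(4 * y)⁻¹ → x = y := by
      intro x hx y hy h
      have h' : (4 * x)⁻¹ = (4 * y)⁻¹ := neg_injective h
      have h'' : (4 : F) * x = 4 * y := inv_injective h'
      exact mul_left_cancel₀ h4 h''
    have himg : ∑ a ∈ univ.erase (0 : F), Complex.normSq (W (-(4 * a)⁻¹))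
        = ∑ b ∈ (univ.erase (0 : F)).image (fun a => -(4 * a)⁻¹),
            Complex.normSq (W b) :=
      (Finset.sum_image (f := fun b => Complex.normSq (W b)) hinj).symm
    have hle : ∑ b ∈ (univ.erase (0 : F)).image (fun a => -(4 * a)⁻¹),
          Complex.normSq (W b) ≤ ∑ b : F, Complex.normSq (W b) :=
      Finset.sum_le_sum_of_subset_of_nonneg (Finset.subset_univ _)
        (fun b _ _ => Complex.normSq_nonneg _)
    have hW : ∑ b : F, Complex.normSq (W b)
        = (Fintype.card F : ℝ) * ∑ r : F, Complex.normSq (D r) := parseval_normSq hχ D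
    rw [himg]
    apply div_le_div_of_nonneg_right ?h hqdR.le |>.trans_eq ?e
    case h => exact hle
    case e => rw [hW]
  -- assemble
  have hsplit : ∑ a : F, Complex.normSq (M a)
      = Complex.normSq (M 0) + ∑ a ∈ univ.erase (0 : F), Complex.normSq (M a) :=
    (Finset.add_sum_erase univ (fun a => Complex.normSq (M a)) (mem_univ 0)).symm
  have hnu : ∀ t : F, Complex.normSq ((ν t : ℂ)) = ((ν t : ℝ)) ^ 2 := by
    intro t
    rw [Complex.normSq_natCast]
    push_cast
    ring
  have hmain : (Fintype.card F : ℝ) * ∑ t : F, ((ν t : ℝ)) ^ 2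
      ≤ (∏ j, ((E j).card : ℝ)) ^ 2
        + (Fintype.card F : ℝ) * (∑ r : F, Complex.normSq (D r)) / (Fintype.card F : ℝ) ^ d := by
    calc (Fintype.card F : ℝ) * ∑ t : F, ((ν t : ℝ)) ^ 2
        = (Fintype.card F : ℝ) * ∑ t : F, Complex.normSq ((ν t : ℂ)) := by
          simp_rw [hnu]
      _ = ∑ a : F, Complex.normSq (M a) := hparse.symm
      _ = Complex.normSq (M 0) + ∑ a ∈ univ.erase (0 : F), Complex.normSq (M a) := hsplit
      _ ≤ (∏ j, ((E j).card : ℝ)) ^ 2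
          + (Fintype.card F : ℝ) * (∑ r : F, Complex.normSq (D r))
              / (Fintype.card F : ℝ) ^ d := by
          rw [hM0]
          exact add_le_add le_rfl herase
  -- rewrite the target
  have hdk : d ≤ 2 * d * k := by
    calc d = d * 1 := (mul_one d).symm
      _ ≤ d * (2 * k) := Nat.mul_le_mul_left d (by omega)
      _ = 2 * d * k := by ring
  have hpow : (Fintype.card F : ℝ) ^ (2 * d * k - d) * (Fintype.card F : ℝ) ^ d
      = (Fintype.card F : ℝ) ^ (2 * d * k) := by
    rw [← pow_add, Nat.sub_add_cancel hdk]
  have hRHS2 : ∀ r : F,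
      ‖(∑ v ∈ univ.filter (fun v : Fin d → F => ∑ i, v i ^ 2 = r),
          ∏ j, (S j v) / (Fintype.card F : ℂ) ^ d)‖ ^ 2
        = Complex.normSq (D r) / (((Fintype.card F : ℝ) ^ d) ^ k) ^ 2 := by
    intro r
    have hprod : ∀ v : Fin d → F, ∏ j, (S j v) / (Fintype.card F : ℂ) ^ d
        = (∏ j, S j v) / ((Fintype.card F : ℂ) ^ d) ^ k := by
      intro v
      rw [Finset.prod_div_distrib, Finset.prod_const, card_univ, Fintype.card_fin]
    simp_rw [hprod]
    rw [← Finset.sum_div]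
    rw [norm_div, div_pow, Complex.sq_norm]
    congr 1
    rw [norm_pow, norm_pow, Complex.norm_natCast]
  have hRHS : (Fintype.card F : ℝ) ^ (2 * d * k - d) *
        ∑ r : F, ‖(∑ v ∈ univ.filter (fun v : Fin d → F => ∑ i, v i ^ 2 = r),
          ∏ j, (S j v) / (Fintype.card F : ℂ) ^ d)‖ ^ 2
      = (∑ r : F, Complex.normSq (D r)) / (Fintype.card F : ℝ) ^ d := by
    simp_rw [hRHS2]
    rw [← Finset.sum_div]
    rw [show (((Fintype.card F : ℝ) ^ d) ^ k) ^ 2 = (Fintype.card F : ℝ) ^ (2 * d * k) by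
      rw [← pow_mul, ← pow_mul]; congr 1; ring]
    rw [← mul_div_assoc]
    rw [div_eq_div_iff (pow_pos hqR (2 * d * k)).ne' hqdR.ne']
    rw [mul_comm ((Fintype.card F : ℝ) ^ (2 * d * k - d)) (∑ r : F, Complex.normSq (D r)),
      mul_assoc, hpow]
  show ∑ t : F, ((ν t : ℝ)) ^ 2
      ≤ (∏ j, ((E j).card : ℝ)) ^ 2 / (Fintype.card F : ℝ)
        + (Fintype.card F : ℝ) ^ (2 * d * k - d) *
          ∑ r : F, ‖(∑ v ∈ univ.filter (fun v : Fin d → F => ∑ i, v i ^ 2 = r),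
            ∏ j, (S j v) / (Fintype.card F : ℂ) ^ d)‖ ^ 2
  rw [hRHS]
  rw [← mul_le_mul_iff_right₀ hqR]
  calc (Fintype.card F : ℝ) * ∑ t : F, ((ν t : ℝ)) ^ 2
      ≤ (∏ j, ((E j).card : ℝ)) ^ 2
        + (Fintype.card F : ℝ) * (∑ r : F, Complex.normSq (D r))
            / (Fintype.card F : ℝ) ^ d := hmain
    _ = (Fintype.card F : ℝ) * ((∏ j, ((E j).card : ℝ)) ^ 2 / (Fintype.card F : ℝ)
          + (∑ r : F, Complex.normSq (D r)) / (Fintype.card F : ℝ) ^ d) := by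
        rw [mul_add, mul_div_assoc', mul_comm (Fintype.card F : ℝ) ((∏ j, ((E j).card : ℝ)) ^ 2),
          mul_div_cancel_right₀ _ hqR0, mul_div_assoc]
end

section
/- If d ≥ 8 is even and E ⊂ F_q^d with |E| ≥ q^{(d−1)/2}, then for all t ∈ F_q^*, ‖Ẽ‖_{L^3(S_t,dσ)} ≲ q^{(−3d^2+23d−20)/(36d−96)} |E|^{(15d−46)/(18d−48)}, assuming the estimates ‖Ẽ‖_{L^{2,∞}(S_t,dσ)} ≲ q^{−(d−1)/4}|E| and ‖Ẽ‖_{L^{(12d−8)/(3d+4),∞}(S_t,dσ)} ≲ |E|^{3/4}. -/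
open Finset

open MeasureTheory Set in
private lemma weak_interp {X : Type} (S : Finset X) (f : X → ℝ)
    (hf : ∀ x, 0 ≤ f x) (A B p M : ℝ) (hA : 0 < A) (hB : 0 < B) (hp : 3 < p) (hM : 0 < M)
    (h2 : ∀ s : ℝ, 0 < s →
      ((S.filter (fun x => s < f x)).card : ℝ) ≤ (S.card : ℝ) * (A / s) ^ (2 : ℝ))
    (hp' : ∀ s : ℝ, 0 < s →
      ((S.filter (fun x => s < f x)).card : ℝ) ≤ (S.card : ℝ) * (B / s) ^ p) :
    ∑ x ∈ S, f x ^ 3 ≤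
      (S.card : ℝ) * (3 * A ^ (2 : ℝ) * M + (3 / (p - 3)) * B ^ p * M ^ (3 - p)) := by
  classical
  set n : ℝ := (S.card : ℝ) with hn
  set g : X → ℝ → ℝ := fun x => (Ioo (0 : ℝ) (f x)).indicator (fun s => 3 * s ^ 2) with hg
  have hint : ∀ x, Integrable (g x) (volume.restrict (Ioi (0 : ℝ))) := by
    intro x
    have h1 : IntegrableOn (fun s : ℝ => 3 * s ^ 2) (Ioo 0 (f x)) := by
      refine IntegrableOn.mono_set ?_ Ioo_subset_Icc_self
      exact (Continuous.continuousOn (by continuity)).integrableOn_compact isCompact_Icc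
    exact (h1.integrable_indicator measurableSet_Ioo).restrict
  have key : ∀ x, f x ^ 3 = ∫ s in Ioi (0 : ℝ), g x s := by
    intro x
    rw [hg]
    simp only
    rw [MeasureTheory.setIntegral_indicator measurableSet_Ioo]
    have h1 : Ioi (0 : ℝ) ∩ Ioo 0 (f x) = Ioo 0 (f x) :=
      inter_eq_self_of_subset_right Ioo_subset_Ioi_self
    rw [h1, ← MeasureTheory.integral_Ioc_eq_integral_Ioo,
      ← intervalIntegral.integral_of_le (hf x), intervalIntegral.integral_const_mul,
      integral_pow]
    norm_num
    ring
  have hsum : ∑ x ∈ S, f x ^ 3 = ∫ s in Ioi (0 : ℝ), ∑ x ∈ S, g x s := by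
    rw [MeasureTheory.integral_finset_sum S (fun x _ => hint x)]
    exact Finset.sum_congr rfl fun x _ => key x
  have hGint : IntegrableOn (fun s => ∑ x ∈ S, g x s) (Ioi (0 : ℝ)) :=
    MeasureTheory.integrable_finset_sum S (fun x _ => hint x)
  have hval : ∀ s : ℝ, 0 < s →
      (∑ x ∈ S, g x s) = ((S.filter (fun x => s < f x)).card : ℝ) * (3 * s ^ 2) := by
    intro s hs
    rw [hg]
    simp only [indicator_apply, Set.mem_Ioo]
    have h1 : ∀ x ∈ S, ((if 0 < s ∧ s < f x then 3 * s ^ 2 else 0) : ℝ)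
        = if s < f x then 3 * s ^ 2 else 0 := by intro x _; simp [hs]
    rw [Finset.sum_congr rfl h1, ← Finset.sum_filter, Finset.sum_const, nsmul_eq_mul]
  have hsplit : (∫ s in Ioi (0 : ℝ), ∑ x ∈ S, g x s)
      = (∫ s in Ioc (0 : ℝ) M, ∑ x ∈ S, g x s) + ∫ s in Ioi M, ∑ x ∈ S, g x s := by
    rw [← MeasureTheory.setIntegral_union (Ioc_disjoint_Ioi le_rfl) measurableSet_Ioi
      (hGint.mono_set Ioc_subset_Ioi_self) (hGint.mono_set (Ioi_subset_Ioi hM.le)),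
      Ioc_union_Ioi_eq_Ioi hM.le]
  have hb1 : (∫ s in Ioc (0 : ℝ) M, ∑ x ∈ S, g x s) ≤ n * (3 * A ^ (2 : ℝ) * M) := by
    have hmono : (∫ s in Ioc (0 : ℝ) M, ∑ x ∈ S, g x s)
        ≤ ∫ _s in Ioc (0 : ℝ) M, 3 * (n * A ^ (2 : ℝ)) := by
      refine MeasureTheory.setIntegral_mono_on (hGint.mono_set Ioc_subset_Ioi_self)
        (integrableOn_const ?_) measurableSet_Ioc ?_
      · rw [Real.volume_Ioc]; exact ENNReal.ofReal_ne_top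
      · intro s hs
        obtain ⟨hs0, _⟩ := hs
        rw [hval s hs0]
        have e1 : (A / s) ^ (2 : ℝ) = A ^ 2 / s ^ 2 := by
          rw [show ((2 : ℝ)) = ((2 : ℕ) : ℝ) by norm_num, Real.rpow_natCast, div_pow]
        have e2 : (A : ℝ) ^ (2 : ℝ) = A ^ 2 := by
          rw [show ((2 : ℝ)) = ((2 : ℕ) : ℝ) by norm_num, Real.rpow_natCast]
        calc ((S.filter (fun x => s < f x)).card : ℝ) * (3 * s ^ 2)
            ≤ (n * (A / s) ^ (2 : ℝ)) * (3 * s ^ 2) :=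
              mul_le_mul_of_nonneg_right (h2 s hs0) (by positivity)
          _ = 3 * (n * A ^ (2 : ℝ)) := by
              rw [e1, e2]; field_simp
    rw [MeasureTheory.setIntegral_const, measureReal_def, Real.volume_Ioc, smul_eq_mul,
      ENNReal.toReal_ofReal (by linarith)] at hmono
    calc (∫ s in Ioc (0 : ℝ) M, ∑ x ∈ S, g x s) ≤ (M - 0) * (3 * (n * A ^ (2 : ℝ))) := hmono
      _ = n * (3 * A ^ (2 : ℝ) * M) := by ring
  have hb2 : (∫ s in Ioi M, ∑ x ∈ S, g x s) ≤ n * ((3 / (p - 3)) * B ^ p * M ^ (3 - p)) := by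
    have hint2 : IntegrableOn (fun s : ℝ => 3 * n * B ^ p * s ^ (2 - p)) (Ioi M) :=
      (integrableOn_Ioi_rpow_of_lt (by linarith) hM).const_mul (3 * n * B ^ p)
    have hmono : (∫ s in Ioi M, ∑ x ∈ S, g x s)
        ≤ ∫ s in Ioi M, 3 * n * B ^ p * s ^ (2 - p) := by
      refine MeasureTheory.setIntegral_mono_on (hGint.mono_set (Ioi_subset_Ioi hM.le))
        hint2 measurableSet_Ioi ?_
      intro s hs
      have hs0 : (0 : ℝ) < s := lt_trans hM hs
      rw [hval s hs0]
      calc ((S.filter (fun x => s < f x)).card : ℝ) * (3 * s ^ 2)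
          ≤ (n * (B / s) ^ p) * (3 * s ^ 2) :=
            mul_le_mul_of_nonneg_right (hp' s hs0) (by positivity)
        _ = 3 * n * B ^ p * s ^ (2 - p) := by
            rw [Real.div_rpow hB.le hs0.le, Real.rpow_sub hs0,
              show (s : ℝ) ^ (2 : ℝ) = s ^ 2 by
                rw [show ((2 : ℝ)) = ((2 : ℕ) : ℝ) by norm_num, Real.rpow_natCast]]
            field_simp
    have hcomp : (∫ s in Ioi M, 3 * n * B ^ p * s ^ (2 - p))
        = n * ((3 / (p - 3)) * B ^ p * M ^ (3 - p)) := by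
      rw [MeasureTheory.integral_const_mul, integral_Ioi_rpow_of_lt (by linarith) hM,
        show (2 - p + 1) = -(p - 3) by ring]
      rw [show -M ^ (-(p - 3)) / -(p - 3) = M ^ (-(p - 3)) / (p - 3) by
        rw [neg_div_neg_eq]]
      rw [show (3 - p) = -(p - 3) by ring]
      ring
    linarith [hmono, hcomp.le]
  rw [hsum, hsplit]
  have := add_le_add hb1 hb2
  linarith

private lemma weak_of_bound {c n s A r : ℝ} (hc : 0 ≤ c) (hn : 0 < n) (hs : 0 < s)
    (hr : 0 < r) (h : s * (c / n) ^ ((1 : ℝ) / r) ≤ A) : c ≤ n * (A / s) ^ r := by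
  have hcn : (0 : ℝ) ≤ c / n := div_nonneg hc hn.le
  have hstep : (c / n) ^ ((1 : ℝ) / r) ≤ A / s := by rw [le_div_iff₀ hs]; linarith
  have hsq := Real.rpow_le_rpow (Real.rpow_nonneg hcn _) hstep hr.le
  rw [← Real.rpow_mul hcn, one_div_mul_cancel (ne_of_gt hr), Real.rpow_one] at hsq
  rw [div_le_iff₀ hn] at hsq
  linarith

set_option maxHeartbeats 2000000 in
/-- Lemma 6.3: for even `d ≥ 8` and `|E| ≥ q^{(d-1)/2}`, assuming the weak-type estimates
`‖Ẽ‖_{L^{2,∞}(S_t,dσ)} ≲ q^{-(d-1)/4}|E|` and `‖Ẽ‖_{L^{(12d-8)/(3d+4),∞}(S_t,dσ)} ≲ |E|^{3/4}`,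
one has `‖Ẽ‖_{L^3(S_t,dσ)} ≲ q^{(-3d²+23d-20)/(36d-96)} |E|^{(15d-46)/(18d-48)}` for `t ≠ 0`. -/
theorem stmt16 (d : ℕ) (hd : 8 ≤ d) (hde : Even d)
    (C₀ C₁ : ℝ) (hC₀ : 0 < C₀) (hC₁ : 0 < C₁) :
    ∃ C : ℝ, 0 < C ∧
      ∀ (F : Type) [Field F] [Fintype F] [DecidableEq F],
        ringChar F ≠ 2 →
        ∀ (χ : AddChar F ℂ), χ ≠ 1 →
        ∀ (E : Finset (Fin d → F)) (t : F), t ≠ 0 →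
          (Fintype.card F : ℝ) ^ (((d : ℝ) - 1) / 2) ≤ (E.card : ℝ) →
        ∀ S : Finset (Fin d → F),
          S = Finset.univ.filter (fun x : Fin d → F => ∑ i, x i ^ 2 = t) →
          (∀ s : ℝ, 0 < s →
            s * (((S.filter (fun x =>
                s < ‖∑ m ∈ E, χ (-(∑ i, x i * m i))‖)).card : ℝ) /
                  (S.card : ℝ)) ^ ((1 : ℝ) / 2)
              ≤ C₀ * (Fintype.card F : ℝ) ^ (-((d : ℝ) - 1) / 4) * (E.card : ℝ)) →
          (∀ s : ℝ, 0 < s →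
            s * (((S.filter (fun x =>
                s < ‖∑ m ∈ E, χ (-(∑ i, x i * m i))‖)).card : ℝ) /
                  (S.card : ℝ)) ^ (((3 : ℝ) * d + 4) / (12 * (d : ℝ) - 8))
              ≤ C₁ * ((E.card : ℝ)) ^ ((3 : ℝ) / 4)) →
          ((∑ x ∈ S, ‖∑ m ∈ E, χ (-(∑ i, x i * m i))‖ ^ 3) /
              (S.card : ℝ)) ^ ((1 : ℝ) / 3)
            ≤ C * (Fintype.card F : ℝ) ^
                ((-3 * (d : ℝ) ^ 2 + 23 * (d : ℝ) - 20) / (36 * (d : ℝ) - 96)) *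
              ((E.card : ℝ)) ^ ((15 * (d : ℝ) - 46) / (18 * (d : ℝ) - 48)) := by
  classical
  have hd8 : (8 : ℝ) ≤ (d : ℝ) := by exact_mod_cast hd
  set D : ℝ := (d : ℝ) with hD
  have hden : (0 : ℝ) < 3 * D + 4 := by linarith
  set p : ℝ := (12 * D - 8) / (3 * D + 4) with hpdef
  have hp3 : 3 < p := by rw [hpdef, lt_div_iff₀ hden]; linarith
  have hp2 : (2 : ℝ) < p := by linarith
  have hp0 : (0 : ℝ) < p := by linarith
  have hp2' : p - 2 ≠ 0 := by linarith
  have hp3' : (0 : ℝ) < p - 3 := by linarith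
  have hne1 : (3 * D + 4) ≠ 0 := ne_of_gt hden
  have hne2 : (6 * D - 16) ≠ 0 := ne_of_gt (by linarith)
  have hne3 : (9 * D - 24) ≠ 0 := ne_of_gt (by linarith)
  have hne4 : (36 * D - 96) ≠ 0 := ne_of_gt (by linarith)
  have hne5 : (18 * D - 48) ≠ 0 := ne_of_gt (by linarith)
  have h1 : p - 2 = (6 * D - 16) / (3 * D + 4) := by
    rw [hpdef]; field_simp; ring
  have h2 : 2 * p - 6 = (6 * D - 40) / (3 * D + 4) := by
    rw [hpdef]; field_simp; ring
  set a : ℝ := (2 * p - 6) / (3 * (p - 2)) with hadef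
  set b : ℝ := p / (3 * (p - 2)) with hbdef
  have ha' : a = (3 * D - 20) / (9 * D - 24) := by
    rw [hadef, h2, h1, eq_div_iff hne3]; field_simp; ring
  have hb' : b = (6 * D - 4) / (9 * D - 24) := by
    rw [hbdef, h1, hpdef, div_eq_div_iff (mul_ne_zero three_ne_zero (div_ne_zero hne2 hne1)) hne3]; field_simp; ring
  have hqe : -(D - 1) / 4 * a = (-3 * D ^ 2 + 23 * D - 20) / (36 * D - 96) := by
    rw [ha', div_mul_div_comm, div_eq_div_iff (mul_ne_zero four_ne_zero hne3) hne4]; ring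
  have hee : a + (3 : ℝ) / 4 * b = (15 * D - 46) / (18 * D - 48) := by
    rw [ha', hb', div_mul_div_comm, div_add_div _ _ hne3 (mul_ne_zero four_ne_zero hne3), div_eq_div_iff (mul_ne_zero hne3 (mul_ne_zero four_ne_zero hne3)) hne5]; ring
  have hKpos : (0 : ℝ) < 3 + 3 / (p - 3) := by positivity
  set K : ℝ := (3 + 3 / (p - 3)) ^ ((1 : ℝ) / 3) with hKdef
  have hK : 0 < K := Real.rpow_pos_of_pos hKpos _
  refine ⟨K * C₀ ^ a * C₁ ^ b, by positivity, ?_⟩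
  intro F _ _ _ hchar χ hχ E t ht hE S hSdef hw2 hwp
  set q : ℝ := (Fintype.card F : ℝ) with hq
  have hq1 : (1 : ℝ) ≤ q := by
    rw [hq]; exact_mod_cast Fintype.card_pos
  have hq0 : (0 : ℝ) < q := lt_of_lt_of_le one_pos hq1
  set e : ℝ := (E.card : ℝ) with he
  have he1 : (1 : ℝ) ≤ e := by
    refine le_trans ?_ hE
    calc (1 : ℝ) = q ^ (0 : ℝ) := (Real.rpow_zero q).symm
      _ ≤ q ^ ((D - 1) / 2) := Real.rpow_le_rpow_of_exponent_le hq1 (by linarith)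
  have he0 : (0 : ℝ) < e := lt_of_lt_of_le one_pos he1
  set f : (Fin d → F) → ℝ := fun x => ‖∑ m ∈ E, χ (-(∑ i, x i * m i))‖ with hf
  have hfnn : ∀ x, 0 ≤ f x := fun x => norm_nonneg _
  by_cases hScard : S.card = 0
  · rw [Finset.card_eq_zero] at hScard
    subst hScard
    rw [Finset.sum_empty, Finset.card_empty, Nat.cast_zero, zero_div,
      Real.zero_rpow (by norm_num : (1 : ℝ) / 3 ≠ 0)]
    have : (0:ℝ) < K * C₀ ^ a * C₁ ^ b *
        q ^ ((-3 * D ^ 2 + 23 * D - 20) / (36 * D - 96)) *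
        e ^ ((15 * D - 46) / (18 * D - 48)) :=
      mul_pos (mul_pos (mul_pos (mul_pos hK (Real.rpow_pos_of_pos hC₀ _))
        (Real.rpow_pos_of_pos hC₁ _)) (Real.rpow_pos_of_pos hq0 _))
        (Real.rpow_pos_of_pos he0 _)
    linarith
  · have npos : (0 : ℝ) < (S.card : ℝ) := by
      exact_mod_cast Nat.pos_of_ne_zero hScard
    set n : ℝ := (S.card : ℝ) with hn
    set A : ℝ := C₀ * q ^ (-(D - 1) / 4) * e with hA
    set B : ℝ := C₁ * e ^ ((3 : ℝ) / 4) with hB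
    have hApos : 0 < A := by
      rw [hA]; positivity
    have hBpos : 0 < B := by
      rw [hB]; positivity
    set M : ℝ := (B ^ p / A ^ (2 : ℝ)) ^ ((1 : ℝ) / (p - 2)) with hM
    have hMpos : 0 < M := by
      rw [hM]
      exact Real.rpow_pos_of_pos (div_pos (Real.rpow_pos_of_pos hBpos _)
        (Real.rpow_pos_of_pos hApos _)) _
    have h2' : ∀ s : ℝ, 0 < s →
        ((S.filter (fun x => s < f x)).card : ℝ) ≤ n * (A / s) ^ (2 : ℝ) := by
      intro s hs
      exact weak_of_bound (Nat.cast_nonneg _) npos hs (by norm_num) (hw2 s hs)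
    have hp'' : ∀ s : ℝ, 0 < s →
        ((S.filter (fun x => s < f x)).card : ℝ) ≤ n * (B / s) ^ p := by
      intro s hs
      have h := hwp s hs
      rw [show ((3 : ℝ) * D + 4) / (12 * D - 8) = 1 / p by rw [hpdef, one_div_div]] at h
      exact weak_of_bound (Nat.cast_nonneg _) npos hs hp0 h
    have hsum := weak_interp S f hfnn A B p M hApos hBpos hp3 hMpos h2' hp''
    have hMkey : B ^ p * M ^ (3 - p) = A ^ (2 : ℝ) * M := by
      have hBp : (0 : ℝ) < B ^ p := Real.rpow_pos_of_pos hBpos p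
      have hA2 : (0 : ℝ) < A ^ (2 : ℝ) := Real.rpow_pos_of_pos hApos _
      have hR : (0 : ℝ) < B ^ p / A ^ (2 : ℝ) := div_pos hBp hA2
      have e1 : M ^ (3 - p) = M * (A ^ (2 : ℝ) / B ^ p) := by
        rw [show (3 - p) = 1 + (2 - p) by ring, Real.rpow_add hMpos, Real.rpow_one]
        congr 1
        rw [hM, ← Real.rpow_mul hR.le,
          show (1 : ℝ) / (p - 2) * (2 - p) = -1 by field_simp <;> ring,
          Real.rpow_neg_one, inv_div]
      have hBne : B ^ p ≠ 0 := ne_of_gt hBp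
      rw [e1]
      calc B ^ p * (M * (A ^ (2 : ℝ) / B ^ p))
          = (A ^ (2 : ℝ) * M) * (B ^ p / B ^ p) := by ring
        _ = A ^ (2 : ℝ) * M := by rw [div_self hBne, mul_one]
    have hsum2 : ∑ x ∈ S, f x ^ 3 ≤ n * ((3 + 3 / (p - 3)) * (A ^ (2 : ℝ) * M)) := by
      have heq : n * (3 * A ^ (2 : ℝ) * M + 3 / (p - 3) * B ^ p * M ^ (3 - p))
          = n * ((3 + 3 / (p - 3)) * (A ^ (2 : ℝ) * M)) := by
        rw [show (3 : ℝ) / (p - 3) * B ^ p * M ^ (3 - p)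
            = 3 / (p - 3) * (B ^ p * M ^ (3 - p)) by ring, hMkey]
        ring
      exact hsum.trans_eq heq
    have hdiv : (∑ x ∈ S, f x ^ 3) / n ≤ (3 + 3 / (p - 3)) * (A ^ (2 : ℝ) * M) := by
      rw [div_le_iff₀ npos]; linarith [hsum2]
    have hnum : (0 : ℝ) ≤ (∑ x ∈ S, f x ^ 3) / n :=
      div_nonneg (Finset.sum_nonneg fun x _ => pow_nonneg (hfnn x) 3) npos.le
    have hfin := Real.rpow_le_rpow hnum hdiv (by norm_num : (0 : ℝ) ≤ 1 / 3)
    -- rewrite the RHS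
    set α : ℝ := (2 * p - 6) / (p - 2) with hα
    set β : ℝ := p / (p - 2) with hβ
    have E2 : A ^ (2 : ℝ) * M = A ^ α * B ^ β := by
      have hMeq : M = B ^ β * A ^ (-((2 : ℝ) / (p - 2))) := by
        rw [hM, Real.div_rpow (Real.rpow_nonneg hBpos.le _) (Real.rpow_nonneg hApos.le _),
          ← Real.rpow_mul hBpos.le, ← Real.rpow_mul hApos.le,
          show p * ((1 : ℝ) / (p - 2)) = β by rw [hβ]; field_simp,
          show (2 : ℝ) * ((1 : ℝ) / (p - 2)) = 2 / (p - 2) by ring,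
          div_eq_mul_inv _ (A ^ ((2:ℝ)/(p-2))), ← Real.rpow_neg hApos.le]
      rw [hMeq, show A ^ (2 : ℝ) * (B ^ β * A ^ (-((2 : ℝ) / (p - 2))))
          = (A ^ (2 : ℝ) * A ^ (-((2 : ℝ) / (p - 2)))) * B ^ β by ring,
        ← Real.rpow_add hApos,
        show (2 : ℝ) + -((2 : ℝ) / (p - 2)) = α by rw [hα]; field_simp; ring]
    have E3 : ((3 + 3 / (p - 3)) * (A ^ α * B ^ β)) ^ ((1 : ℝ) / 3)
        = K * A ^ a * B ^ b := by
      rw [Real.mul_rpow hKpos.le (by positivity),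
        Real.mul_rpow (Real.rpow_nonneg hApos.le _) (Real.rpow_nonneg hBpos.le _),
        ← Real.rpow_mul hApos.le, ← Real.rpow_mul hBpos.le,
        show α * ((1 : ℝ) / 3) = a by rw [hα, ha', h2, h1, eq_div_iff hne3]; field_simp; ring,
        show β * ((1 : ℝ) / 3) = b by rw [hβ, hb', hpdef, h1, div_mul_div_comm, div_eq_div_iff (mul_ne_zero (div_ne_zero hne2 hne1) three_ne_zero) hne3]; field_simp; ring,
        hKdef, mul_assoc]
    have E4 : A ^ a = C₀ ^ a * q ^ ((-3 * D ^ 2 + 23 * D - 20) / (36 * D - 96)) * e ^ a := by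
      rw [hA, Real.mul_rpow (by positivity) he0.le,
        Real.mul_rpow hC₀.le (Real.rpow_nonneg hq0.le _),
        ← Real.rpow_mul hq0.le, hqe]
    have E5 : B ^ b = C₁ ^ b * e ^ ((3 : ℝ) / 4 * b) := by
      rw [hB, Real.mul_rpow hC₁.le (Real.rpow_nonneg he0.le _), ← Real.rpow_mul he0.le]
    calc ((∑ x ∈ S, f x ^ 3) / n) ^ ((1 : ℝ) / 3)
        ≤ ((3 + 3 / (p - 3)) * (A ^ (2 : ℝ) * M)) ^ ((1 : ℝ) / 3) := hfin
      _ = K * A ^ a * B ^ b := by rw [E2, E3]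
      _ = K * C₀ ^ a * C₁ ^ b * q ^ ((-3 * D ^ 2 + 23 * D - 20) / (36 * D - 96)) *
            e ^ ((15 * D - 46) / (18 * D - 48)) := by
          rw [E4, E5, ← hee, Real.rpow_add he0]
          ring
end
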